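/- Fix an integer m ≥ 2 and p ∈ (0,1). With S = Fin m, Q = Bool × Fin m, the Ising channel P(y|x,s) (equal to 1 if x = s = y, 1/2 if x ≠ s and y ∈ {x,s}, 0 otherwise), the stationary distribution π(s,(1,q_s)) = (2/(m(p+3)))·1[q_s = s], π(s,(0,q_s)) = 2p/(m(p+3)) if q_s = s and (1-p)/(m(m-1)(p+3)) otherwise, and the input distribution u(x|s,(1,s)) = p·1[x=s] + ((1-p)/(m-1))·1[x≠s], u(x|s,(0,q_s)) = 1[x = s] (u arbitrary stochastic at nodes (1,q_s) with q_s ≠ s): the conditional entropy H(Y|X,S) := −Σ_{s,q,x,y} π(s,q)·u(x|s,q)·P(y|x,s)·log₂ P(y|x,s) equals 2(1-p)/(p+3). -/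

import Mathlib

/-- The Ising channel law `P(y|x,s)`. -/
noncomputable def IsingP {m : ℕ} (y x s : Fin m) : ℝ :=
  if x = s then (if y = s then 1 else 0)
  else if y = x ∨ y = s then 1 / 2 else 0

/-- The stationary distribution `π` on `S × Q`: `π(s,(1,q_s)) = (2/(m(p+3)))·1[q_s=s]`,
`π(s,(0,q_s)) = 2p/(m(p+3))` if `q_s = s` and `(1-p)/(m(m-1)(p+3))` otherwise. -/
noncomputable def statDist (p : ℝ) {m : ℕ} (sq : Fin m × (Bool × Fin m)) : ℝ :=
  if sq.2.1 then (if sq.2.2 = sq.1 then 2 / (m * (p + 3)) else 0)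
  else (if sq.2.2 = sq.1 then 2 * p / (m * (p + 3))
        else (1 - p) / (m * ((m : ℝ) - 1) * (p + 3)))

/-- computation of `H(Y|X,S)` in Lemma 2 of the paper: with the
stationary distribution `π`, and any stochastic input distribution `u` with
`u(x|s,(1,s)) = p·1[x=s] + ((1-p)/(m-1))·1[x≠s]` and `u(x|s,(0,q_s)) = 1[x=s]`
(arbitrary stochastic at nodes `(1,q_s)` with `q_s ≠ s`), the conditional entropy
`H(Y|X,S) = -Σ_{s,q,x,y} π(s,q)u(x|s,q)P(y|x,s)log₂ P(y|x,s)` equals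
`2(1-p)/(p+3)` (convention `0·log₂ 0 = 0`, automatic since `Real.log 0 = 0`). -/
theorem ising_entropy_Y_given_XS (m : ℕ) (hm : 2 ≤ m) (p : ℝ)
    (hp : p ∈ Set.Ioo (0 : ℝ) 1)
    (u : Fin m → Fin m → Bool × Fin m → ℝ)
    (hu_nonneg : ∀ x s q, 0 ≤ u x s q)
    (hu_sum : ∀ s q, ∑ x : Fin m, u x s q = 1)
    (hu_known : ∀ s x : Fin m,
      u x s (true, s) = if x = s then p else (1 - p) / ((m : ℝ) - 1))
    (hu_unknown : ∀ (s qs x : Fin m),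
      u x s (false, qs) = if x = s then 1 else 0) :
    -(∑ s : Fin m, ∑ q : Bool × Fin m, ∑ x : Fin m, ∑ y : Fin m,
        statDist p (s, q) * u x s q * IsingP y x s * Real.logb 2 (IsingP y x s))
      = 2 * (1 - p) / (p + 3) := by
  obtain ⟨hp0, hp1⟩ := hp
  have hmR : (2:ℝ) ≤ (m:ℝ) := by exact_mod_cast hm
  have hm0 : (m:ℝ) ≠ 0 := by linarith
  have hp3 : p + 3 ≠ 0 := by linarith
  have hlogb : Real.logb 2 (1/2 : ℝ) = -1 := by
    rw [one_div, Real.logb_inv, Real.logb_self_eq_one] <;> norm_num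
  have hy : ∀ x s : Fin m, ∑ y : Fin m, IsingP y x s * Real.logb 2 (IsingP y x s)
      = if x = s then 0 else -1 := by
    intro x s
    by_cases hxs : x = s
    · subst hxs
      rw [if_pos rfl, Finset.sum_eq_zero]
      intro y _
      simp only [IsingP, if_pos rfl]
      by_cases h : y = x <;> simp [h]
    · rw [if_neg hxs]
      have hterm : ∀ y : Fin m, IsingP y x s * Real.logb 2 (IsingP y x s)
          = if y ∈ ({x, s} : Finset (Fin m)) then -(1/2 : ℝ) else 0 := by
        intro y
        simp only [IsingP, if_neg hxs, Finset.mem_insert, Finset.mem_singleton]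
        by_cases h : y = x ∨ y = s
        · rw [if_pos h, if_pos h, hlogb]; ring
        · rw [if_neg h, if_neg h]; simp
      rw [Finset.sum_congr rfl fun y _ => hterm y]
      rw [Finset.sum_ite_mem, Finset.univ_inter, Finset.sum_const,
        Finset.card_insert_of_notMem (by simpa using hxs), Finset.card_singleton]
      norm_num
  have hx : ∀ (s : Fin m) (q : Bool × Fin m),
      ∑ x : Fin m, ∑ y : Fin m,
        statDist p (s, q) * u x s q * IsingP y x s * Real.logb 2 (IsingP y x s)
      = statDist p (s, q) * (u s s q - 1) := by
    intro s q
    have h1 : ∀ x : Fin m, ∑ y : Fin m,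
        statDist p (s, q) * u x s q * IsingP y x s * Real.logb 2 (IsingP y x s)
        = statDist p (s, q) * ((if x = s then u x s q else 0) - u x s q) := by
      intro x
      have : ∀ y : Fin m, statDist p (s, q) * u x s q * IsingP y x s *
          Real.logb 2 (IsingP y x s)
          = statDist p (s, q) * u x s q * (IsingP y x s * Real.logb 2 (IsingP y x s)) := by
        intro y; ring
      rw [Finset.sum_congr rfl fun y _ => this y, ← Finset.mul_sum, hy x]
      by_cases hxs : x = s
      · rw [if_pos hxs, if_pos hxs]; ring
      · rw [if_neg hxs, if_neg hxs]; ring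
    rw [Finset.sum_congr rfl fun x _ => h1 x, ← Finset.mul_sum, Finset.sum_sub_distrib,
      Finset.sum_ite_eq' Finset.univ s (fun x => u x s q), if_pos (Finset.mem_univ s),
      hu_sum s q]
  have hq : ∀ s : Fin m, ∑ q : Bool × Fin m, statDist p (s, q) * (u s s q - 1)
      = 2 / (m * (p + 3)) * (p - 1) := by
    intro s
    rw [Fintype.sum_prod_type, Fintype.sum_bool]
    have hfalse : ∀ qs : Fin m, statDist p (s, (false, qs)) * (u s s (false, qs) - 1) = 0 := by
      intro qs
      rw [hu_unknown s qs s, if_pos rfl]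
      ring
    have htrue : ∀ qs : Fin m, statDist p (s, (true, qs)) * (u s s (true, qs) - 1)
        = if qs = s then 2 / (m * (p + 3)) * (p - 1) else 0 := by
      intro qs
      by_cases h : qs = s
      · subst h
        rw [hu_known qs qs, if_pos rfl]
        simp [statDist]
      · simp [statDist, h]
    rw [Finset.sum_congr rfl fun qs _ => hfalse qs,
      Finset.sum_congr rfl fun qs _ => htrue qs,
      Finset.sum_ite_eq' Finset.univ s, if_pos (Finset.mem_univ s),
      Finset.sum_const_zero]
    ring
  have hmain : ∀ s : Fin m, ∑ q : Bool × Fin m, ∑ x : Fin m, ∑ y : Fin m,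
      statDist p (s, q) * u x s q * IsingP y x s * Real.logb 2 (IsingP y x s)
      = 2 / (m * (p + 3)) * (p - 1) := fun s =>
    (Finset.sum_congr rfl fun q _ => hx s q).trans (hq s)
  rw [Finset.sum_congr rfl fun s _ => hmain s, Finset.sum_const, Finset.card_univ,
    Fintype.card_fin, nsmul_eq_mul]
  have hcancel : (m:ℝ) * (2 / (↑m * (p + 3)) * (p - 1)) = 2 * (p - 1) / (p + 3) := by
    field_simp
  rw [hcancel]
  ring
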